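/- Let p be an odd prime and let t be an integer. Then Σ_{k=0}^{p-1} C(2k,k)² · t^k · 16^(p-1-k) ≡ (-1)^((p-1)/2) · Σ_{k=0}^{p-1} C(2k,k)² · (1-t)^k · 16^(p-1-k) (mod p²). Equivalently, Σ_{k=0}^{p-1} C(2k,k)² (t/16)^k ≡ (-1)^((p-1)/2) Σ_{k=0}^{p-1} C(2k,k)² ((1-t)/16)^k (mod p²). -/

import Mathlib

open Finset

private lemma int_choose_succ (n k : ℕ) :
    (Nat.choose n (k + 1) : ℤ) * (k + 1) = (Nat.choose n k : ℤ) * ((n : ℤ) - k) := by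
  rcases lt_or_ge k n with h | h
  · have := Nat.choose_succ_right_eq n k
    zify [h.le] at this
    linarith
  · rcases eq_or_lt_of_le h with rfl | h'
    · simp [Nat.choose_eq_zero_of_lt]
    · rw [Nat.choose_eq_zero_of_lt (by omega), Nat.choose_eq_zero_of_lt h']
      simp

private lemma central_fact (k : ℕ) :
    ((Nat.choose (2 * k) k : ℤ)) * (Nat.factorial k : ℤ)
      = 2 ^ k * ∏ j ∈ range k, (2 * (j : ℤ) + 1) := by
  induction k with
  | zero => simp
  | succ k ih =>
    have h := Nat.succ_mul_centralBinom_succ k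
    rw [Nat.centralBinom_eq_two_mul_choose, Nat.centralBinom_eq_two_mul_choose] at h
    have h' : ((k : ℤ) + 1) * (Nat.choose (2 * (k + 1)) (k + 1) : ℤ)
        = 2 * (2 * (k : ℤ) + 1) * (Nat.choose (2 * k) k : ℤ) := by exact_mod_cast h
    have hk1 : ((k : ℤ) + 1) ≠ 0 := by positivity
    apply mul_left_cancel₀ hk1
    rw [prod_range_succ, Nat.factorial_succ]
    push_cast
    linear_combination (((k : ℤ) + 1) * (Nat.factorial k : ℤ)) * h'
      + (((k : ℤ) + 1) * 2 * (2 * (k : ℤ) + 1)) * ih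

private lemma fact_sq_choose (n k : ℕ) :
    ((Nat.factorial k : ℤ)) ^ 2 * (Nat.choose (n + k) k : ℤ) * (Nat.choose n k : ℤ) * 4 ^ k
      = ∏ j ∈ range k, ((2 * (n : ℤ) + 1) ^ 2 - (2 * (j : ℤ) + 1) ^ 2) := by
  induction k with
  | zero => simp
  | succ k ih =>
    rw [prod_range_succ, ← ih, Nat.factorial_succ]
    have h1 : ((n : ℤ) + k + 1) * (Nat.choose (n + k) k : ℤ)
        = (Nat.choose (n + k + 1) (k + 1) : ℤ) * ((k : ℤ) + 1) := by
      exact_mod_cast Nat.add_one_mul_choose_eq (n + k) k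
    have h2 := int_choose_succ n k
    rw [show n + (k + 1) = n + k + 1 by omega]
    push_cast
    linear_combination (-(4 : ℤ) * 4 ^ k * (Nat.factorial k : ℤ) ^ 2 * (Nat.choose n (k+1) : ℤ) * ((k:ℤ)+1)) * h1
      + ((4 : ℤ) * 4 ^ k * (Nat.factorial k : ℤ) ^ 2 * (Nat.choose (n + k) k : ℤ) * ((n:ℤ) + k + 1)) * h2

private lemma findiff (m : ℕ) : ∀ (a N : ℕ), m ≤ N →
    ∑ i ∈ range (m + 1), (-1 : ℤ) ^ i * (Nat.choose m i : ℤ) * (Nat.choose (a + i) N : ℤ)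
      = (-1) ^ m * (Nat.choose a (N - m) : ℤ) := by
  induction m with
  | zero => intro a N _; simp
  | succ m ih =>
    intro a N hm
    have hm' : m ≤ N := by omega
    rw [Finset.sum_range_succ']
    have hsplit : ∀ i : ℕ, (-1 : ℤ) ^ (i + 1) * (Nat.choose (m + 1) (i + 1) : ℤ)
          * (Nat.choose (a + (i + 1)) N : ℤ)
        = -((-1 : ℤ) ^ i * (Nat.choose m i : ℤ) * (Nat.choose (a + 1 + i) N : ℤ))
          + (-1 : ℤ) ^ (i + 1) * (Nat.choose m (i + 1) : ℤ) * (Nat.choose (a + (i + 1)) N : ℤ) := by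
      intro i
      rw [Nat.choose_succ_succ, show a + (i + 1) = a + 1 + i by omega]
      push_cast
      ring
    rw [Finset.sum_congr rfl fun i _ => hsplit i, Finset.sum_add_distrib, Finset.sum_neg_distrib]
    have e1 : ∑ i ∈ range (m + 1), (-1 : ℤ) ^ i * (Nat.choose m i : ℤ) * (Nat.choose (a + 1 + i) N : ℤ)
        = (-1) ^ m * (Nat.choose (a + 1) (N - m) : ℤ) := ih (a + 1) N hm'
    have e2 : ∑ i ∈ range (m + 1), (-1 : ℤ) ^ (i + 1) * (Nat.choose m (i + 1) : ℤ)
          * (Nat.choose (a + (i + 1)) N : ℤ)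
          + (-1 : ℤ) ^ 0 * (Nat.choose m 0 : ℤ) * (Nat.choose (a + 0) N : ℤ)
        = (-1) ^ m * (Nat.choose a (N - m) : ℤ) := by
      have hs := Finset.sum_range_succ'
        (fun i => (-1 : ℤ) ^ i * (Nat.choose m i : ℤ) * (Nat.choose (a + i) N : ℤ)) (m + 1)
      have ht := Finset.sum_range_succ
        (fun i => (-1 : ℤ) ^ i * (Nat.choose m i : ℤ) * (Nat.choose (a + i) N : ℤ)) (m + 1)
      simp only [Nat.choose_eq_zero_of_lt (Nat.lt_succ_self m), Nat.cast_zero] at hs ht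
      rw [← hs, ht, ih a N hm']
      ring
    have pascal : (Nat.choose (a + 1) (N - m) : ℤ)
        = (Nat.choose a (N - (m + 1)) : ℤ) + (Nat.choose a (N - m) : ℤ) := by
      have : N - m = (N - (m + 1)) + 1 := by omega
      rw [this, Nat.choose_succ_succ]
      push_cast; ring
    simp only [pow_zero, one_mul, Nat.choose_zero_right, Nat.cast_one, add_zero] at e2 ⊢
    linear_combination e2 - e1 - ((-1 : ℤ) ^ m) * pascal

private lemma sumD (n j : ℕ) (hj : j ≤ n) :
    ∑ k ∈ range (n + 1), (-1 : ℤ) ^ k * (Nat.choose n k : ℤ) * (Nat.choose (n + k) k : ℤ)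
        * (Nat.choose k j : ℤ)
      = (-1) ^ n * (Nat.choose n j : ℤ) * (Nat.choose (n + j) j : ℤ) := by
  have hsub : Ico j (n + 1) ⊆ range (n + 1) := by
    rw [Finset.range_eq_Ico]; exact Finset.Ico_subset_Ico (Nat.zero_le j) le_rfl
  have hstep : ∑ k ∈ range (n + 1), (-1 : ℤ) ^ k * (Nat.choose n k : ℤ) * (Nat.choose (n + k) k : ℤ)
        * (Nat.choose k j : ℤ)
      = ∑ k ∈ Ico j (n + 1), (-1 : ℤ) ^ k * (Nat.choose n k : ℤ) * (Nat.choose (n + k) k : ℤ)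
        * (Nat.choose k j : ℤ) := by
    refine (Finset.sum_subset hsub ?_).symm
    intro k hk hk'
    have : k < j := by
      simp only [Finset.mem_range] at hk
      simp only [Finset.mem_Ico] at hk'
      omega
    rw [Nat.choose_eq_zero_of_lt this]
    ring
  rw [hstep, Finset.sum_Ico_eq_sum_range]
  have hrange : n + 1 - j = (n - j) + 1 := by omega
  rw [hrange]
  have hterm : ∀ i ∈ range ((n - j) + 1),
      (-1 : ℤ) ^ (j + i) * (Nat.choose n (j + i) : ℤ) * (Nat.choose (n + (j + i)) (j + i) : ℤ)
        * (Nat.choose (j + i) j : ℤ)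
      = ((-1 : ℤ) ^ j * (Nat.choose n j : ℤ))
        * ((-1 : ℤ) ^ i * (Nat.choose (n - j) i : ℤ) * (Nat.choose ((n + j) + i) n : ℤ)) := by
    intro i hi
    have hi' : i ≤ n - j := by simpa using Nat.lt_succ_iff.mp (Finset.mem_range.mp hi)
    have hji : j + i ≤ n := by omega
    have hc1 : (Nat.choose n (j + i)) * (Nat.choose (j + i) j) = (Nat.choose n j) * (Nat.choose (n - j) i) := by
      have := Nat.choose_mul (n := n) (k := j + i) (s := j) (Nat.le_add_right j i)
      simpa [Nat.add_sub_cancel_left] using this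
    have hc2 : Nat.choose (n + (j + i)) (j + i) = Nat.choose ((n + j) + i) n := by
      rw [show n + (j + i) = (n + j) + i by omega]
      exact Nat.choose_symm_of_eq_add (by omega)
    have hc1' : (Nat.choose n (j + i) : ℤ) * (Nat.choose (j + i) j : ℤ)
        = (Nat.choose n j : ℤ) * (Nat.choose (n - j) i : ℤ) := by exact_mod_cast hc1
    rw [hc2, pow_add]
    linear_combination ((-1 : ℤ) ^ j * (-1 : ℤ) ^ i * (Nat.choose ((n + j) + i) n : ℤ)) * hc1'
  rw [Finset.sum_congr rfl hterm, ← Finset.mul_sum]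
  rw [findiff (n - j) (n + j) n (by omega)]
  rw [show n - (n - j) = j by omega]
  have : (-1 : ℤ) ^ j * (-1 : ℤ) ^ (n - j) = (-1) ^ n := by
    rw [← pow_add]; congr 1; omega
  linear_combination ((Nat.choose n j : ℤ) * (Nat.choose (n + j) j : ℤ)) * this

private lemma legB (n : ℕ) (t : ℤ) :
    ∑ k ∈ range (n + 1), (-1 : ℤ) ^ k * (Nat.choose n k : ℤ) * (Nat.choose (n + k) k : ℤ) * (1 - t) ^ k
      = (-1) ^ n * ∑ k ∈ range (n + 1),
          (-1 : ℤ) ^ k * (Nat.choose n k : ℤ) * (Nat.choose (n + k) k : ℤ) * t ^ k := by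
  have hexp : ∀ k ∈ range (n + 1),
      (-1 : ℤ) ^ k * (Nat.choose n k : ℤ) * (Nat.choose (n + k) k : ℤ) * (1 - t) ^ k
      = ∑ j ∈ range (n + 1), (-1 : ℤ) ^ k * (Nat.choose n k : ℤ) * (Nat.choose (n + k) k : ℤ)
          * ((Nat.choose k j : ℤ) * (-t) ^ j) := by
    intro k hk
    have hk' : k ≤ n := Nat.lt_succ_iff.mp (Finset.mem_range.mp hk)
    rw [← Finset.mul_sum]
    congr 1
    have hbin : (1 - t) ^ k = ∑ j ∈ range (k + 1), (Nat.choose k j : ℤ) * (-t) ^ j := by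
      have := add_pow (-t) 1 k
      simp only [one_pow, mul_one] at this
      rw [show (1 : ℤ) - t = -t + 1 by ring, this]
      exact Finset.sum_congr rfl fun j _ => by ring
    rw [hbin]
    apply Finset.sum_subset (by simp [Finset.range_subset]; omega)
    intro j hj hj'
    have : k < j := by
      simp only [Finset.mem_range] at hj hj'
      omega
    rw [Nat.choose_eq_zero_of_lt this]
    ring
  rw [Finset.sum_congr rfl hexp, Finset.sum_comm]
  have hinner : ∀ j ∈ range (n + 1),
      ∑ k ∈ range (n + 1), (-1 : ℤ) ^ k * (Nat.choose n k : ℤ) * (Nat.choose (n + k) k : ℤ)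
          * ((Nat.choose k j : ℤ) * (-t) ^ j)
      = (-t) ^ j * ((-1) ^ n * (Nat.choose n j : ℤ) * (Nat.choose (n + j) j : ℤ)) := by
    intro j hj
    have hj' : j ≤ n := Nat.lt_succ_iff.mp (Finset.mem_range.mp hj)
    rw [← sumD n j hj', Finset.mul_sum]
    exact Finset.sum_congr rfl fun k _ => by ring
  rw [Finset.sum_congr rfl hinner, Finset.mul_sum]
  exact Finset.sum_congr rfl fun j _ => by rw [neg_pow]; ring

private lemma key_R (p n k : ℕ) (hp : p.Prime) (hpn : p = 2 * n + 1) (hk : k < p) :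
    (Nat.choose (n + k) k : ZMod (p ^ 2)) * (Nat.choose n k : ZMod (p ^ 2)) * 16 ^ k
      = (-1) ^ k * (Nat.choose (2 * k) k : ZMod (p ^ 2)) ^ 2 := by
  set R := ZMod (p ^ 2)
  have hF : IsUnit ((Nat.factorial k : R)) := by
    rw [ZMod.isUnit_iff_coprime]
    apply Nat.Coprime.pow_right
    exact ((Nat.Prime.coprime_iff_not_dvd hp).mpr (by
      rw [Nat.Prime.dvd_factorial hp]; omega)).symm
  have hF2 : IsUnit ((Nat.factorial k : R) ^ 2) := hF.pow 2
  apply hF2.mul_left_cancel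
  -- cast lemma 1 to R
  have l1 : ((Nat.factorial k : R)) ^ 2 * (Nat.choose (n + k) k : R) * (Nat.choose n k : R) * 4 ^ k
      = ∏ j ∈ range k, ((2 * (n : R) + 1) ^ 2 - (2 * (j : R) + 1) ^ 2) := by
    have := congrArg (fun z : ℤ => (z : R)) (fact_sq_choose n k)
    push_cast [R] at this
    exact this
  have l2 : (Nat.choose (2 * k) k : R) * (Nat.factorial k : R)
      = 2 ^ k * ∏ j ∈ range k, (2 * (j : R) + 1) := by
    have := congrArg (fun z : ℤ => (z : R)) (central_fact k)
    push_cast [R] at this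
    exact this
  have hp0 : ((p : R)) ^ 2 = 0 := by
    have : ((p ^ 2 : ℕ) : R) = 0 := ZMod.natCast_self _
    push_cast at this
    exact this
  have hpn' : (2 * (n : R) + 1) = (p : R) := by
    have : ((p : ℕ) : R) = ((2 * n + 1 : ℕ) : R) := by rw [← hpn]
    push_cast [R] at this
    linear_combination -this
  rw [hpn'] at l1
  have hprod : ∏ j ∈ range k, ((p : R) ^ 2 - (2 * (j : R) + 1) ^ 2)
      = (-1) ^ k * ∏ j ∈ range k, (2 * (j : R) + 1) ^ 2 := by
    rw [hp0]
    have hc : ∀ j ∈ range k, (0 : R) - (2 * (j : R) + 1) ^ 2 = (-1) * (2 * (j : R) + 1) ^ 2 :=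
      fun j _ => by ring
    rw [Finset.prod_congr rfl hc, Finset.prod_mul_distrib, Finset.prod_const, Finset.card_range]
  have l2sq : (Nat.choose (2 * k) k : R) ^ 2 * ((Nat.factorial k : R)) ^ 2
      = 4 ^ k * ∏ j ∈ range k, (2 * (j : R) + 1) ^ 2 := by
    have h4 : ((2 : R) ^ k) ^ 2 = 4 ^ k := by
      rw [← pow_mul, mul_comm k 2, pow_mul]; norm_num
    calc (Nat.choose (2 * k) k : R) ^ 2 * ((Nat.factorial k : R)) ^ 2
        = ((Nat.choose (2 * k) k : R) * (Nat.factorial k : R)) ^ 2 := by ring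
      _ = ((2 : R) ^ k) ^ 2 * (∏ j ∈ range k, (2 * (j : R) + 1)) ^ 2 := by rw [l2]; ring
      _ = 4 ^ k * ∏ j ∈ range k, (2 * (j : R) + 1) ^ 2 := by rw [h4, ← Finset.prod_pow]
  calc (Nat.factorial k : R) ^ 2 * ((Nat.choose (n + k) k : R) * (Nat.choose n k : R) * 16 ^ k)
      = ((Nat.factorial k : R) ^ 2 * (Nat.choose (n + k) k : R) * (Nat.choose n k : R) * 4 ^ k) * 4 ^ k := by
        rw [show (16 : R) ^ k = 4 ^ k * 4 ^ k by rw [← mul_pow]; norm_num]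
        ring
    _ = ((-1) ^ k * ∏ j ∈ range k, (2 * (j : R) + 1) ^ 2) * 4 ^ k := by rw [l1, hprod]
    _ = (-1) ^ k * ((Nat.choose (2 * k) k : R) ^ 2 * ((Nat.factorial k : R)) ^ 2) := by
        rw [l2sq]; ring
    _ = (Nat.factorial k : R) ^ 2 * ((-1) ^ k * (Nat.choose (2 * k) k : R) ^ 2) := by ring

theorem rv_t_symm (p : ℕ) (hp : p.Prime) (hodd : Odd p) (t : ℤ) :
    (∑ k ∈ range p, ((Nat.choose (2 * k) k : ℤ)) ^ 2 * t ^ k * 16 ^ (p - 1 - k)) ≡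
      (-1) ^ ((p - 1) / 2) *
        ∑ k ∈ range p, ((Nat.choose (2 * k) k : ℤ)) ^ 2 * (1 - t) ^ k * 16 ^ (p - 1 - k)
      [ZMOD (p : ℤ) ^ 2] := by
  obtain ⟨n, hpn⟩ := hodd
  have hpn' : p = 2 * n + 1 := by omega
  have hn : (p - 1) / 2 = n := by omega
  rw [hn, show ((p : ℤ) ^ 2) = ((p ^ 2 : ℕ) : ℤ) by push_cast; ring,
    ← ZMod.intCast_eq_intCast_iff]
  push_cast
  set R := ZMod (p ^ 2) with hR
  have main : ∀ u : R,
      (∑ k ∈ range p, (Nat.choose (2 * k) k : R) ^ 2 * u ^ k * 16 ^ (p - 1 - k))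
        = 16 ^ (p - 1) * ∑ k ∈ range (n + 1),
            (-1 : R) ^ k * (Nat.choose n k : R) * (Nat.choose (n + k) k : R) * u ^ k := by
    intro u
    have hterm : ∀ k ∈ range p, (Nat.choose (2 * k) k : R) ^ 2 * u ^ k * 16 ^ (p - 1 - k)
        = 16 ^ (p - 1) * ((-1 : R) ^ k * (Nat.choose n k : R) * (Nat.choose (n + k) k : R) * u ^ k) := by
      intro k hk
      have hk' : k < p := mem_range.mp hk
      have hkey := key_R p n k hp hpn' hk'
      have h16 : (16 : R) ^ k * 16 ^ (p - 1 - k) = 16 ^ (p - 1) := by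
        rw [← pow_add]; congr 1; omega
      have hsq : (Nat.choose (2 * k) k : R) ^ 2
          = (-1 : R) ^ k * ((Nat.choose (n + k) k : R) * (Nat.choose n k : R) * 16 ^ k) := by
        rw [hkey]
        have : ((-1 : R)) ^ k * (-1 : R) ^ k = 1 := by
          rw [← pow_add, ← two_mul, pow_mul]; norm_num
        linear_combination (-(Nat.choose (2 * k) k : R) ^ 2) * this
      rw [hsq, ← h16]
      ring
    rw [Finset.sum_congr rfl hterm, ← Finset.mul_sum]
    congr 1
    refine (Finset.sum_subset (by intro x hx; simp only [mem_range] at hx ⊢; omega) ?_).symm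
    intro k hk hk'
    have : n < k := by simp only [mem_range] at hk hk'; omega
    rw [Nat.choose_eq_zero_of_lt this]
    ring
  rw [main ((t : ℤ) : R), main (1 - ((t : ℤ) : R))]
  have hB : (∑ k ∈ range (n + 1),
        (-1 : R) ^ k * (Nat.choose n k : R) * (Nat.choose (n + k) k : R) * (1 - ((t : ℤ) : R)) ^ k)
      = (-1) ^ n * ∑ k ∈ range (n + 1),
        (-1 : R) ^ k * (Nat.choose n k : R) * (Nat.choose (n + k) k : R) * ((t : ℤ) : R) ^ k := by
    have := congrArg (fun z : ℤ => (z : R)) (legB n t)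
    push_cast [R] at this
    exact this
  rw [hB]
  have hone : ((-1 : R)) ^ n * (-1 : R) ^ n = 1 := by
    rw [← pow_add, ← two_mul, pow_mul]; norm_num
  linear_combination (-(16 : R) ^ (p - 1) * ∑ k ∈ range (n + 1),
      (-1 : R) ^ k * (Nat.choose n k : R) * (Nat.choose (n + k) k : R) * ((t : ℤ) : R) ^ k) * hone
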